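/- Let G_0 be a residually finite group that is 2-good, and suppose that for every nontrivial class ψ ∈ H²(G_0, ℤᵏ) there exists a prime power pᵐ such that the image of ψ in H²(G_0, (ℤ/pᵐ)ᵏ) is nontrivial. Then a central extension 1 → ℤᵏ → G → G_0 → 1 splits if and only if the induced exact sequence of profinite completions 1 → ℤ̂ᵏ → Ĝ → Ĝ_0 → 1 splits. -/

import Mathlib

open scoped Pointwise


/-- A bundled profinite group. -/
structure ProfiniteGrpPkg : Type 1 where
  carrier : Type
  [grp : Group carrier]
  [top : TopologicalSpace carrier]
  [tgrp : IsTopologicalGroup carrier]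
  [cpt : CompactSpace carrier]
  [t2 : T2Space carrier]
  [td : TotallyDisconnectedSpace carrier]

attribute [instance] ProfiniteGrpPkg.grp ProfiniteGrpPkg.top ProfiniteGrpPkg.tgrp
  ProfiniteGrpPkg.cpt ProfiniteGrpPkg.t2 ProfiniteGrpPkg.td

/-- `ι : A → P` exhibits `P` as the profinite completion of `A`. -/
def IsProfiniteCompletionMap (A : Type) [Group A] (P : ProfiniteGrpPkg)
    (ι : A →* P.carrier) : Prop :=
  DenseRange ι ∧ ∀ (Q : Type) [Group Q] [Finite Q] (f : A →* Q),
    ∃ g : P.carrier →* Q, IsOpen (g.ker : Set P.carrier) ∧ g.comp ι = f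

/-- Residually finite group. -/
def ResiduallyFiniteGroup (H : Type*) [Group H] : Prop :=
  ∀ h : H, h ≠ 1 → ∃ N : Subgroup H, N.Normal ∧ N.index ≠ 0 ∧ h ∉ N

/-- `(j, π)` is a central extension `1 → A → G → Q → 1`. -/
def IsCentralExt {A G Q : Type} [Group A] [Group G] [Group Q]
    (j : A →* G) (π : G →* Q) : Prop :=
  Function.Injective j ∧ (∀ a g, j a * g = g * j a) ∧
    Function.Surjective π ∧ π.ker = j.range

/-- The extension `π : G ↠ Q` splits. -/
def SplitsExt {G Q : Type} [Group G] [Group Q] (π : G →* Q) : Prop :=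
  ∃ s : Q →* G, π.comp s = MonoidHom.id Q

/-- `G₀` is 2-good (characterised, following Reid, by: any extension of `G₀` by a
finitely generated group `N` induces an injection of profinite completions
`N̂ → Ê`). -/
def IsTwoGood (G₀ : Type) [Group G₀] : Prop :=
  ∀ (E : Type) [Group E], ∀ N : Subgroup E, N.Normal → Group.FG ↥N →
    ∀ q : E →* G₀, Function.Surjective q → q.ker = N →
    ∀ (PN PE : ProfiniteGrpPkg) (ιN : ↥N →* PN.carrier) (ιE : E →* PE.carrier),
      IsProfiniteCompletionMap ↥N PN ιN → IsProfiniteCompletionMap E PE ιE →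
      ∀ j : PN.carrier →* PE.carrier, Continuous j → j.comp ιN = ιE.comp N.subtype →
        Function.Injective j

/-- Coordinatewise reduction `ℤᵏ → (ℤ/n)ᵏ`, written multiplicatively. -/
def redHom (k n : ℕ) : Multiplicative (Fin k → ℤ) →* Multiplicative (Fin k → ZMod n) :=
  AddMonoidHom.toMultiplicative ((Int.castAddHom (ZMod n)).compLeft (Fin k))


section Prelim

-- open normal subgroup avoiding a nontrivial element, in a profinite group
lemma exists_openNormal_not_mem {K : Type*} [Group K] [TopologicalSpace K] [IsTopologicalGroup K]
    [CompactSpace K] [T2Space K] [TotallyDisconnectedSpace K] {z : K} (hz : z ≠ 1) :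
    ∃ H : OpenNormalSubgroup K, z ∉ H := by
  have h1 : IsOpen ({z}ᶜ : Set K) := isOpen_compl_singleton
  have h2 : (1 : K) ∈ ({z}ᶜ : Set K) := by simpa using (Ne.symm hz)
  obtain ⟨W, hW, h1W, hWsub⟩ := isTopologicalBasis_isClopen.mem_nhds_iff.mp
    (h1.mem_nhds h2)
  obtain ⟨H, hH⟩ := IsTopologicalGroup.exist_openNormalSubgroup_sub_clopen_nhds_of_one hW h1W
  exact ⟨H, fun hmem => hWsub (hH hmem) rfl⟩

-- a hom with open kernel into a discrete group is continuous
lemma continuous_of_openKer {A B : Type*} [Group A] [TopologicalSpace A] [IsTopologicalGroup A]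
    [Group B] [TopologicalSpace B] [DiscreteTopology B] (f : A →* B)
    (h : IsOpen (f.ker : Set A)) : Continuous f := by
  rw [continuous_discrete_rng]
  intro b
  rcases em (∃ a, f a = b) with ⟨a, ha⟩ | hne
  · have : f ⁻¹' {b} = (fun x => a⁻¹ * x) ⁻¹' (f.ker : Set A) := by
      ext x
      simp only [Set.mem_preimage, Set.mem_singleton_iff, SetLike.mem_coe, MonoidHom.mem_ker,
        map_mul, map_inv, ha]
      constructor
      · intro hx; rw [hx]; simp
      · intro hx
        have := inv_mul_eq_one.mp hx
        exact this.symm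
    rw [this]
    exact h.preimage (by continuity)
  · have : f ⁻¹' {b} = ∅ := by
      ext x; simp only [Set.mem_preimage, Set.mem_singleton_iff, Set.mem_empty_iff_false,
        iff_false]
      exact fun hx => hne ⟨x, hx⟩
    rw [this]; exact isOpen_empty

-- two continuous homs agreeing on a dense range agree
lemma monoidHom_eq_of_dense {A P B : Type*} [Group A] [Group P] [TopologicalSpace P]
    [Group B] [TopologicalSpace B] [T2Space B] {ι : A →* P} (hd : DenseRange ι)
    {f g : P →* B} (hf : Continuous f) (hg : Continuous g)
    (h : f.comp ι = g.comp ι) : f = g := by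
  have : (f : P → B) = g := hd.equalizer hf hg (by ext a; exact DFunLike.congr_fun h a)
  ext x; exact congrFun this x

end Prelim

section Ext
-- Extension lemma: an abstract hom from a group to a profinite group extends
-- continuously along the profinite completion map.
lemma extension_lemma {G₀ : Type} [Group G₀] (P₀ : ProfiniteGrpPkg) (ι₀ : G₀ →* P₀.carrier)
    (h : IsProfiniteCompletionMap G₀ P₀ ι₀)
    (K : Type) [Group K] [TopologicalSpace K] [IsTopologicalGroup K]
    [CompactSpace K] [T2Space K] [TotallyDisconnectedSpace K]
    (f : G₀ →* K) : ∃ F : P₀.carrier →* K, Continuous F ∧ F.comp ι₀ = f := by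
  classical
  -- finite quotients of K
  have hfin : ∀ U : OpenNormalSubgroup K, Finite (K ⧸ U.toSubgroup) :=
    fun U => Subgroup.quotient_finite_of_isOpen _ U.isOpen
  have hlift : ∀ U : OpenNormalSubgroup K, ∃ g : P₀.carrier →* K ⧸ U.toSubgroup,
      IsOpen (g.ker : Set P₀.carrier) ∧
        g.comp ι₀ = (QuotientGroup.mk' U.toSubgroup).comp f := by
    intro U
    haveI := hfin U
    exact h.2 _ ((QuotientGroup.mk' U.toSubgroup).comp f)
  choose gU hgopen hgcomp using hlift
  -- the diagonal embedding of K
  let e : K →* ∀ U : OpenNormalSubgroup K, K ⧸ U.toSubgroup :=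
    MonoidHom.mk' (fun x U => QuotientGroup.mk' U.toSubgroup x) (by
      intro a b; funext U; simp)
  have he_cont : Continuous e := continuous_pi (fun U => continuous_quot_mk)
  have he_inj : Function.Injective e := by
    refine (injective_iff_map_eq_one e).mpr (fun z hz => ?_)
    by_contra hne
    obtain ⟨U, hU⟩ := exists_openNormal_not_mem (K := K) hne
    have := congrFun hz U
    rw [show (1 : ∀ U : OpenNormalSubgroup K, K ⧸ U.toSubgroup) U = 1 from rfl] at this
    exact hU ((QuotientGroup.eq_one_iff z).mp this)
  -- the assembled map
  let Φ : P₀.carrier →* ∀ U : OpenNormalSubgroup K, K ⧸ U.toSubgroup :=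
    MonoidHom.mk' (fun x U => gU U x) (by intro a b; funext U; simp)
  have hΦ_cont : Continuous Φ := continuous_pi (fun U =>
    continuous_of_openKer (gU U) (hgopen U))
  have hΦι : ∀ a : G₀, Φ (ι₀ a) = e (f a) := by
    intro a; funext U
    exact DFunLike.congr_fun (hgcomp U) a
  -- range Φ ⊆ range e
  have hrange_closed : IsClosed (Set.range e) :=
    (isCompact_range he_cont).isClosed
  have hsub : ∀ x, Φ x ∈ Set.range e := by
    have : Set.range ι₀ ⊆ Φ ⁻¹' (Set.range e) := by
      rintro _ ⟨a, rfl⟩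
      exact ⟨f a, (hΦι a).symm⟩
    intro x
    have hcl : IsClosed (Φ ⁻¹' (Set.range e)) := hrange_closed.preimage hΦ_cont
    have h2 := hcl.closure_subset_iff.mpr this
    rw [h.1.closure_eq] at h2
    exact h2 (Set.mem_univ x)
  choose Ffun hFfun using hsub
  have hF1 : Ffun 1 = 1 := he_inj (by rw [hFfun, map_one, map_one])
  let F : P₀.carrier →* K := MonoidHom.mk' Ffun (by
    intro a b
    apply he_inj
    rw [hFfun, map_mul, map_mul, hFfun, hFfun])
  have hFcont : Continuous F := by
    rw [continuous_iff_isClosed]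
    intro C hC
    have : F ⁻¹' C = Φ ⁻¹' (e '' C) := by
      ext x
      simp only [Set.mem_preimage, Set.mem_image]
      constructor
      · intro hx; exact ⟨Ffun x, hx, hFfun x⟩
      · rintro ⟨c, hc, hcx⟩
        have : c = Ffun x := he_inj (by rw [hcx, hFfun])
        rwa [this] at hc
    rw [this]
    exact ((hC.isCompact.image he_cont).isClosed).preimage hΦ_cont
  refine ⟨F, hFcont, ?_⟩
  ext a
  apply he_inj
  show e (Ffun (ι₀ a)) = e (f a)
  rw [hFfun, hΦι]
end Ext

section FinitePkg

/-- Package of a finite group with the discrete topology. -/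
def finitePkg (N : Type) [Group N] [Finite N] : ProfiniteGrpPkg :=
  letI : TopologicalSpace N := ⊥
  haveI : DiscreteTopology N := ⟨rfl⟩
  haveI : IsTopologicalGroup N :=
    { continuous_mul := continuous_of_discreteTopology
      continuous_inv := continuous_of_discreteTopology }
  { carrier := N }

lemma finite_completion (N : Type) [Group N] [Finite N] :
    IsProfiniteCompletionMap N (finitePkg N) (MonoidHom.id N) := by
  haveI : DiscreteTopology (finitePkg N).carrier := ⟨rfl⟩
  constructor
  · exact Function.Surjective.denseRange (fun x => ⟨x, rfl⟩)
  · intro Q _ _ f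
    exact ⟨f, isOpen_discrete _, rfl⟩

end FinitePkg

section Completion

variable (G : Type) [Group G]

/-- Index type for the profinite completion: normal subgroups of finite index. -/
def cIdx := {N : Subgroup G // N.Normal ∧ N.FiniteIndex}

instance cIdx.group (N : cIdx G) : Group (G ⧸ N.1) :=
  @QuotientGroup.Quotient.group G _ N.1 N.2.1

instance cIdx.top (N : cIdx G) : TopologicalSpace (G ⧸ N.1) := ⊥

instance cIdx.discrete (N : cIdx G) : DiscreteTopology (G ⧸ N.1) := ⟨rfl⟩

instance cIdx.finite (N : cIdx G) : Finite (G ⧸ N.1) :=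
  @Subgroup.finite_quotient_of_finiteIndex G _ N.1 N.2.2

instance cIdx.tgrp (N : cIdx G) : IsTopologicalGroup (G ⧸ N.1) where
  continuous_mul := continuous_of_discreteTopology
  continuous_inv := continuous_of_discreteTopology

/-- The diagonal map into the product of all finite quotients. -/
def cDiag : G →* ∀ N : cIdx G, G ⧸ N.1 :=
  MonoidHom.mk' (fun g N => QuotientGroup.mk g) (by intro a b; rfl)

/-- The closure of the image of the diagonal map. -/
def cSub : Subgroup (∀ N : cIdx G, G ⧸ N.1) := (cDiag G).range.topologicalClosure

/-- The profinite completion package. -/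
def completionPkg : ProfiniteGrpPkg where
  carrier := ↥(cSub G)
  cpt := isCompact_iff_compactSpace.mp
    ((Subgroup.isClosed_topologicalClosure _).isCompact)

/-- The canonical map into the profinite completion. -/
def cι : G →* (completionPkg G).carrier :=
  (cDiag G).codRestrict (cSub G)
    (fun g => (Subgroup.le_topologicalClosure _) ⟨g, rfl⟩)

lemma completion_is : IsProfiniteCompletionMap G (completionPkg G) (cι G) := by
  constructor
  · -- dense range
    rw [DenseRange, dense_iff_inter_open]
    rintro U hU ⟨x, hxU⟩
    obtain ⟨V, hV, rfl⟩ := isOpen_induced_iff.mp hU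
    have hx : x.1 ∈ closure (Set.range (cDiag G)) := by
      have h2 : x.1 ∈ ((cDiag G).range.topologicalClosure : Set (∀ N : cIdx G, G ⧸ N.1)) := x.2
      rwa [Subgroup.topologicalClosure_coe, MonoidHom.coe_range] at h2
    rw [mem_closure_iff] at hx
    obtain ⟨y, hyV, g, hg⟩ := hx V hV hxU
    exact ⟨cι G g, ⟨by exact (hg ▸ hyV : cDiag G g ∈ V),
      ⟨g, rfl⟩⟩⟩
  · intro Q _ _ f
    haveI : Finite ↥f.range := Set.Finite.to_subtype (Set.toFinite _)
    obtain ⟨N, hN⟩ : ∃ N : cIdx G, N.1 = f.ker :=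
      ⟨⟨f.ker, ⟨f.normal_ker, Subgroup.finiteIndex_ker f⟩⟩, rfl⟩
    haveI : (N.1).Normal := N.2.1
    let proj : (completionPkg G).carrier →* G ⧸ N.1 :=
      (Pi.evalMonoidHom _ N).comp (cSub G).subtype
    have hproj_cont : Continuous proj := (continuous_apply N).comp continuous_subtype_val
    let φ : G ⧸ N.1 →* Q := QuotientGroup.lift N.1 f (fun x hx => by
      rw [hN] at hx; exact hx)
    refine ⟨φ.comp proj, ?_, ?_⟩
    · have : ((φ.comp proj).ker : Set (completionPkg G).carrier) =
          proj ⁻¹' (φ.ker : Set (G ⧸ N.1)) := by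
        ext x; simp [MonoidHom.mem_ker]
      rw [this]
      exact (isOpen_discrete _).preimage hproj_cont
    · ext a; rfl

end Completion

section RedHom

lemma redHom_apply (k n : ℕ) (a : Multiplicative (Fin k → ℤ)) (i : Fin k) :
    (Multiplicative.toAdd (redHom k n a)) i = ((Multiplicative.toAdd a i : ℤ) : ZMod n) := rfl

lemma redHom_surjective (k n : ℕ) [NeZero n] : Function.Surjective (redHom k n) := by
  intro b
  choose f hf using fun i => ZMod.intCast_surjective (Multiplicative.toAdd b i)
  refine ⟨Multiplicative.ofAdd f, ?_⟩
  have : ∀ i, Multiplicative.toAdd (redHom k n (Multiplicative.ofAdd f)) i =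
      Multiplicative.toAdd b i := by
    intro i
    rw [redHom_apply]
    exact hf i
  have hfun : Multiplicative.toAdd (redHom k n (Multiplicative.ofAdd f)) =
      Multiplicative.toAdd b := funext this
  exact Multiplicative.toAdd.injective hfun

end RedHom
theorem central_extension_splits_iff_profinite_splits (k : ℕ) (G₀ G : Type)
    [Group G₀] [Group G]
    (hrf : ResiduallyFiniteGroup G₀) (hgood : IsTwoGood G₀)
    (i : Multiplicative (Fin k → ℤ) →* G) (π : G →* G₀) (hext : IsCentralExt i π)
    (hH2 : ∀ (E : Type) [Group E] (j : Multiplicative (Fin k → ℤ) →* E) (q : E →* G₀),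
      IsCentralExt j q → ¬ SplitsExt q →
      ∃ p m : ℕ, p.Prime ∧ 0 < m ∧
        ∀ (E' : Type) [Group E'] (j' : Multiplicative (Fin k → ZMod (p ^ m)) →* E')
          (q' : E' →* G₀) (θ : E →* E'),
          IsCentralExt j' q' → q'.comp θ = q →
          θ.comp j = j'.comp (redHom k (p ^ m)) → ¬ SplitsExt q') :
    SplitsExt π ↔
      ∀ (P P₀ : ProfiniteGrpPkg) (ι : G →* P.carrier) (ι₀ : G₀ →* P₀.carrier),
        IsProfiniteCompletionMap G P ι → IsProfiniteCompletionMap G₀ P₀ ι₀ →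
        ∀ πh : P.carrier →* P₀.carrier, Continuous πh → πh.comp ι = ι₀.comp π →
          ∃ s : P₀.carrier →* P.carrier, Continuous s ∧
            πh.comp s = MonoidHom.id P₀.carrier := by
  obtain ⟨hiinj, hicent, hπsurj, hπker⟩ := hext
  constructor
  · -- forward direction
    rintro ⟨s, hs⟩ P P₀ ι ι₀ hP hP₀ πh hπhc hπhcomp
    obtain ⟨F, hFc, hFcomp⟩ := extension_lemma P₀ ι₀ hP₀ P.carrier (ι.comp s)
    refine ⟨F, hFc, ?_⟩
    apply monoidHom_eq_of_dense hP₀.1 (hπhc.comp hFc) continuous_id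
    ext x
    have h1 : F (ι₀ x) = ι (s x) := DFunLike.congr_fun hFcomp x
    have h2 : πh (ι (s x)) = ι₀ (π (s x)) := DFunLike.congr_fun hπhcomp (s x)
    have h3 : π (s x) = x := DFunLike.congr_fun hs x
    show πh (F (ι₀ x)) = ι₀ x
    rw [h1, h2, h3]
  · -- backward direction
    intro hRHS
    by_contra hns
    obtain ⟨p, m, hp, hm, hkey⟩ := hH2 G i π ⟨hiinj, hicent, hπsurj, hπker⟩ hns
    haveI : NeZero (p ^ m) := ⟨pow_ne_zero m hp.ne_zero⟩
    have hredsurj := redHom_surjective k (p ^ m)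
    -- the pushout extension
    set S : Subgroup G := Subgroup.map i (redHom k (p ^ m)).ker with hSdef
    have hScentral : ∀ s ∈ S, ∀ g : G, s * g = g * s := by
      rintro s ⟨a, _, rfl⟩ g
      exact hicent a g
    haveI hSnormal : S.Normal := by
      constructor
      intro s hs g
      have h1 : g * s * g⁻¹ = s := by
        rw [show g * s = s * g from (hScentral s hs g).symm, mul_assoc, mul_inv_cancel, mul_one]
      rwa [h1]
    set θ : G →* G ⧸ S := QuotientGroup.mk' S with hθdef
    have hθsurj : Function.Surjective θ := QuotientGroup.mk'_surjective S
    have hSkerπ : ∀ x ∈ S, π x = 1 := by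
      rintro x ⟨a, _, rfl⟩
      have hx : i a ∈ π.ker := by rw [hπker]; exact ⟨a, rfl⟩
      exact hx
    set q' : (G ⧸ S) →* G₀ := QuotientGroup.lift S π hSkerπ with hq'def
    have hq'θ : q'.comp θ = π := by ext g; rfl
    have hq'θ' : ∀ g : G, q' (θ g) = π g := fun g => rfl
    have hθi_inS : ∀ a ∈ (redHom k (p ^ m)).ker, (θ.comp i) a = 1 := fun a ha =>
      (QuotientGroup.eq_one_iff _).mpr ⟨a, ha, rfl⟩
    set iso := QuotientGroup.quotientKerEquivOfSurjective _ hredsurj with hisodef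
    set j' : Multiplicative (Fin k → ZMod (p ^ m)) →* G ⧸ S :=
      (QuotientGroup.lift (redHom k (p ^ m)).ker (θ.comp i) hθi_inS).comp
        iso.symm.toMonoidHom with hj'def
    have hiso : ∀ a : Multiplicative (Fin k → ℤ),
        iso.symm (redHom k (p ^ m) a) = QuotientGroup.mk a := by
      intro a
      apply iso.injective
      rw [MulEquiv.apply_symm_apply]
      exact (QuotientGroup.kerLift_mk _ a).symm
    have hθj' : ∀ a : Multiplicative (Fin k → ℤ),
        j' (redHom k (p ^ m) a) = θ (i a) := by
      intro a
      show (QuotientGroup.lift (redHom k (p ^ m)).ker (θ.comp i) hθi_inS)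
        (iso.symm (redHom k (p ^ m) a)) = θ (i a)
      rw [hiso]
      rfl
    have hj'inj : Function.Injective j' := by
      refine (injective_iff_map_eq_one j').mpr (fun b hb => ?_)
      obtain ⟨a, rfl⟩ := hredsurj b
      rw [hθj'] at hb
      obtain ⟨a', ha', haa⟩ := (QuotientGroup.eq_one_iff _).mp hb
      have ha : a' = a := hiinj haa
      rw [← ha]
      exact ha'
    have hj'cent : ∀ b e, j' b * e = e * j' b := by
      intro b e
      obtain ⟨a, rfl⟩ := hredsurj b
      obtain ⟨g, rfl⟩ := hθsurj e
      rw [hθj', ← map_mul, ← map_mul, hicent a g]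
    have hq'surj : Function.Surjective q' := by
      intro x
      obtain ⟨g, rfl⟩ := hπsurj x
      exact ⟨θ g, rfl⟩
    have hkerq' : q'.ker = j'.range := by
      ext e
      constructor
      · intro he
        obtain ⟨g, rfl⟩ := hθsurj e
        have hg : g ∈ π.ker := he
        rw [hπker] at hg
        obtain ⟨a, rfl⟩ := hg
        exact ⟨redHom k (p ^ m) a, hθj' a⟩
      · rintro ⟨b, rfl⟩
        obtain ⟨a, rfl⟩ := hredsurj b
        rw [MonoidHom.mem_ker, hθj']
        show π (i a) = 1
        have hia : i a ∈ π.ker := by rw [hπker]; exact ⟨a, rfl⟩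
        exact hia
    have hce : IsCentralExt j' q' := ⟨hj'inj, hj'cent, hq'surj, hkerq'⟩
    have hθi : θ.comp i = j'.comp (redHom k (p ^ m)) := by
      ext a
      exact (hθj' a).symm
    have hnosplit' : ¬ SplitsExt q' := hkey (G ⧸ S) j' q' θ hce hq'θ hθi
    -- completions
    have hPG := completion_is G
    have hPG0 := completion_is G₀
    have hPE := completion_is (G ⧸ S)
    obtain ⟨πh, hπhc, hπhcomp⟩ := extension_lemma (completionPkg G) (cι G) hPG
      (completionPkg G₀).carrier ((cι G₀).comp π)
    obtain ⟨shat, hshatc, hshat⟩ := hRHS (completionPkg G) (completionPkg G₀) (cι G) (cι G₀)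
      hPG hPG0 πh hπhc hπhcomp
    obtain ⟨θhat, hθhatc, hθhat⟩ := extension_lemma (completionPkg G) (cι G) hPG
      (completionPkg (G ⧸ S)).carrier ((cι (G ⧸ S)).comp θ)
    obtain ⟨πE, hπEc, hπEcomp⟩ := extension_lemma (completionPkg (G ⧸ S)) (cι (G ⧸ S)) hPE
      (completionPkg G₀).carrier ((cι G₀).comp q')
    have hπh' : ∀ g : G, πh (cι G g) = cι G₀ (π g) := fun g => DFunLike.congr_fun hπhcomp g
    have hθhat' : ∀ g : G, θhat (cι G g) = cι (G ⧸ S) (θ g) := fun g =>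
      DFunLike.congr_fun hθhat g
    have hπE' : ∀ e : G ⧸ S, πE (cι (G ⧸ S) e) = cι G₀ (q' e) := fun e =>
      DFunLike.congr_fun hπEcomp e
    have hπθ : πE.comp θhat = πh := by
      apply monoidHom_eq_of_dense hPG.1 (hπEc.comp hθhatc) hπhc
      ext g
      show πE (θhat (cι G g)) = πh (cι G g)
      rw [hθhat' g, hπE' (θ g), hπh' g, hq'θ' g]
    have hsplit' : ∀ y, πE (θhat (shat y)) = y := by
      intro y
      have h1 : πE (θhat (shat y)) = πh (shat y) := DFunLike.congr_fun hπθ (shat y)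
      have h2 : πh (shat y) = y := DFunLike.congr_fun hshat y
      exact h1.trans h2
    -- injectivity of the completion maps
    have hι0inj : Function.Injective (cι G₀) := by
      refine (injective_iff_map_eq_one (cι G₀)).mpr (fun x hx => ?_)
      by_contra hxne
      obtain ⟨N, hNnorm, hNidx, hxN⟩ := hrf x hxne
      haveI := hNnorm
      haveI : N.FiniteIndex := ⟨hNidx⟩
      obtain ⟨g, _, hgcomp⟩ := hPG0.2 (G₀ ⧸ N) (QuotientGroup.mk' N)
      have hgcomp' : ∀ y : G₀, g (cι G₀ y) = QuotientGroup.mk' N y := fun y =>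
        DFunLike.congr_fun hgcomp y
      have h1 : QuotientGroup.mk' N x = 1 := by
        rw [← hgcomp' x, hx, map_one]
      exact hxN ((QuotientGroup.eq_one_iff x).mp h1)
    -- q'.ker is finite
    haveI hfinN : Finite ↥(q'.ker) := by
      have h1 : Finite ↥(j'.range) := by
        apply Finite.of_surjective (f := fun b : Multiplicative (Fin k → ZMod (p ^ m)) =>
          (⟨j' b, ⟨b, rfl⟩⟩ : ↥(j'.range)))
        rintro ⟨x, b, rfl⟩
        exact ⟨b, rfl⟩
      rw [hkerq']
      exact h1
    have hNcent : ∀ x ∈ q'.ker, ∀ e : G ⧸ S, x * e = e * x := by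
      intro x hx e
      rw [hkerq'] at hx
      obtain ⟨b, rfl⟩ := hx
      exact hj'cent b e
    -- injectivity of ιE on q'.ker via 2-goodness
    haveI : DiscreteTopology (finitePkg ↥(q'.ker)).carrier := ⟨rfl⟩
    have hEinjN : Function.Injective ((cι (G ⧸ S)).comp (q'.ker).subtype) := by
      refine hgood (G ⧸ S) q'.ker (MonoidHom.normal_ker q') Group.fg_of_finite q' hq'surj rfl
        (finitePkg ↥(q'.ker)) (completionPkg (G ⧸ S)) (MonoidHom.id _) (cι (G ⧸ S))
        (finite_completion _) hPE ((cι (G ⧸ S)).comp (q'.ker).subtype)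
        continuous_of_discreteTopology ?_
      ext x
      rfl
    have hEinj : Function.Injective (cι (G ⧸ S)) := by
      refine (injective_iff_map_eq_one (cι (G ⧸ S))).mpr (fun e he => ?_)
      have h1 : (cι G₀) (q' e) = 1 := by
        rw [← hπE' e, he, map_one]
      have h2 : q' e = 1 := hι0inj (by rw [h1, map_one])
      have he' : e ∈ q'.ker := h2
      have h3 := hEinjN (a₁ := ⟨e, he'⟩) (a₂ := ⟨1, (q'.ker).one_mem⟩)
        (by show (cι (G ⧸ S)) e = (cι (G ⧸ S)) 1; rw [he, map_one])
      exact Subtype.ext_iff.mp h3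
    -- the image of the kernel in the completion
    set M : Subgroup (completionPkg (G ⧸ S)).carrier := Subgroup.map (cι (G ⧸ S)) q'.ker
      with hMdef
    haveI hMfin : Finite ↥M := by
      apply Finite.of_surjective (f := fun x : ↥(q'.ker) =>
        (⟨(cι (G ⧸ S)) x.1, ⟨x.1, x.2, rfl⟩⟩ : ↥M))
      rintro ⟨y, x, hx, rfl⟩
      exact ⟨⟨x, hx⟩, rfl⟩
    have hMcent : ∀ u ∈ M, ∀ z : (completionPkg (G ⧸ S)).carrier, u * z = z * u := by
      rintro u ⟨x, hx, rfl⟩ z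
      have hfun : (fun z : (completionPkg (G ⧸ S)).carrier => (cι (G ⧸ S)) x * z) =
          (fun z => z * (cι (G ⧸ S)) x) := by
        apply hPE.1.equalizer
        · exact continuous_const.mul continuous_id
        · exact continuous_id.mul continuous_const
        · funext e
          show (cι (G ⧸ S)) x * (cι (G ⧸ S)) e = (cι (G ⧸ S)) e * (cι (G ⧸ S)) x
          rw [← map_mul, ← map_mul, hNcent x hx e]
      exact congrFun hfun z
    -- exactness: the kernel of πE is contained in M
    have hker : ∀ z : (completionPkg (G ⧸ S)).carrier, πE z = 1 → z ∈ M := by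
      intro z hz
      by_contra hzM
      have hchoice : ∀ w : ↥M, ∃ H : OpenNormalSubgroup (completionPkg (G ⧸ S)).carrier,
          (w : (completionPkg (G ⧸ S)).carrier)⁻¹ * z ∉ H := by
        intro w
        have hne : (w : (completionPkg (G ⧸ S)).carrier)⁻¹ * z ≠ 1 := by
          intro h
          apply hzM
          have heq : (w : (completionPkg (G ⧸ S)).carrier) = z := inv_mul_eq_one.mp h
          exact heq ▸ w.2
        exact exists_openNormal_not_mem hne
      choose Uw hUw using hchoice
      obtain ⟨W, hWopen, hWnormal, hWle⟩ :
          ∃ W : Subgroup (completionPkg (G ⧸ S)).carrier,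
            IsOpen (W : Set (completionPkg (G ⧸ S)).carrier) ∧ W.Normal ∧
              ∀ w : ↥M, W ≤ (Uw w).toSubgroup := by
        refine ⟨⨅ w : ↥M, (Uw w).toSubgroup, ?_, ?_, fun w => iInf_le _ w⟩
        · have h1 : ((⨅ w : ↥M, (Uw w).toSubgroup : Subgroup _) :
              Set (completionPkg (G ⧸ S)).carrier) =
              ⋂ w : ↥M, ((Uw w).toSubgroup : Set (completionPkg (G ⧸ S)).carrier) := by
            simp
          rw [h1]
          exact isOpen_iInter_of_finite (fun w => (Uw w).isOpen)
        · constructor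
          intro x hx g
          rw [Subgroup.mem_iInf] at hx ⊢
          intro w
          exact (Uw w).isNormal'.conj_mem x (hx w) g
      haveI := hWnormal
      haveI hMnormal : M.Normal := by
        constructor
        intro x hx g
        have h1 : g * x * g⁻¹ = x := by
          rw [show g * x = x * g from (hMcent x hx g).symm, mul_assoc, mul_inv_cancel, mul_one]
        rwa [h1]
      set D : Subgroup (completionPkg (G ⧸ S)).carrier := M ⊔ W with hDdef
      haveI hDnormal : D.Normal := Subgroup.sup_normal M W
      have hDopen : IsOpen (D : Set (completionPkg (G ⧸ S)).carrier) :=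
        Subgroup.isOpen_mono le_sup_right hWopen
      have hzD : z ∉ D := by
        intro hzDmem
        have h1 : z ∈ (M : Set (completionPkg (G ⧸ S)).carrier) *
            (W : Set (completionPkg (G ⧸ S)).carrier) := by
          rw [← Subgroup.mul_normal M W]
          exact hzDmem
        obtain ⟨w, hw, u, hu, hwu⟩ := Set.mem_mul.mp h1
        have h2 : (⟨w, hw⟩ : ↥M).1⁻¹ * z ∈ (Uw ⟨w, hw⟩).toSubgroup := by
          have h3 : w⁻¹ * z = u := by rw [← hwu]; exact inv_mul_cancel_left w u
          rw [show (⟨w, hw⟩ : ↥M).1 = w from rfl, h3]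
          exact hWle ⟨w, hw⟩ hu
        exact hUw ⟨w, hw⟩ h2
      haveI : Finite ((completionPkg (G ⧸ S)).carrier ⧸ D) :=
        Subgroup.quotient_finite_of_isOpen D hDopen
      haveI : DiscreteTopology ((completionPkg (G ⧸ S)).carrier ⧸ D) :=
        QuotientGroup.discreteTopology hDopen
      have hkill : ∀ x ∈ q'.ker, ((QuotientGroup.mk' D).comp (cι (G ⧸ S))) x = 1 := by
        intro x hx
        exact (QuotientGroup.eq_one_iff _).mpr (le_sup_left (a := M) (b := W) ⟨x, hx, rfl⟩)
      set isoq := QuotientGroup.quotientKerEquivOfSurjective q' hq'surj with hisoqdef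
      set c0 : G₀ →* (completionPkg (G ⧸ S)).carrier ⧸ D :=
        (QuotientGroup.lift q'.ker ((QuotientGroup.mk' D).comp (cι (G ⧸ S))) hkill).comp
          isoq.symm.toMonoidHom with hc0def
      have hc0 : ∀ e : G ⧸ S, c0 (q' e) = QuotientGroup.mk' D ((cι (G ⧸ S)) e) := by
        intro e
        have h1 : isoq.symm (q' e) = QuotientGroup.mk e := by
          apply isoq.injective
          rw [MulEquiv.apply_symm_apply]
          exact (QuotientGroup.kerLift_mk _ e).symm
        show (QuotientGroup.lift q'.ker ((QuotientGroup.mk' D).comp (cι (G ⧸ S))) hkill)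
          (isoq.symm (q' e)) = _
        rw [h1]
        rfl
      obtain ⟨C, hCopen, hCcomp⟩ := hPG0.2 ((completionPkg (G ⧸ S)).carrier ⧸ D) c0
      have hCcomp' : ∀ y : G₀, C (cι G₀ y) = c0 y := fun y => DFunLike.congr_fun hCcomp y
      have hCeq : C.comp πE = QuotientGroup.mk' D := by
        apply monoidHom_eq_of_dense hPE.1
          ((continuous_of_openKer C hCopen).comp hπEc) continuous_quotient_mk'
        ext e
        show C (πE ((cι (G ⧸ S)) e)) = QuotientGroup.mk' D ((cι (G ⧸ S)) e)
        rw [hπE' e, hCcomp' (q' e)]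
        exact hc0 e
      have hCeq' : C (πE z) = QuotientGroup.mk' D z := DFunLike.congr_fun hCeq z
      have h2 : QuotientGroup.mk' D z = 1 := by
        rw [← hCeq', hz, map_one]
      exact hzD ((QuotientGroup.eq_one_iff z).mp h2)
    -- construct the splitting of q'
    have hsec : ∀ x : G₀, ∃ e : G ⧸ S, (cι (G ⧸ S)) e = θhat (shat ((cι G₀) x)) := by
      intro x
      have h1 : πE (θhat (shat ((cι G₀) x))) = (cι G₀) x := hsplit' _
      obtain ⟨e0, he0⟩ := hq'surj x
      have h2 : πE (θhat (shat ((cι G₀) x)) * ((cι (G ⧸ S)) e0)⁻¹) = 1 := by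
        rw [map_mul, map_inv, h1, hπE' e0, he0, mul_inv_cancel]
      obtain ⟨w, hw, hweq⟩ := hker _ h2
      refine ⟨w * e0, ?_⟩
      rw [map_mul, hweq, inv_mul_cancel_right]
    choose sfun hsfun using hsec
    have hsmul : ∀ a b : G₀, sfun (a * b) = sfun a * sfun b := by
      intro a b
      apply hEinj
      calc (cι (G ⧸ S)) (sfun (a * b)) = θhat (shat ((cι G₀) (a * b))) := hsfun _
        _ = θhat (shat ((cι G₀) a * (cι G₀) b)) := by rw [map_mul]
        _ = θhat (shat ((cι G₀) a)) * θhat (shat ((cι G₀) b)) := by rw [map_mul, map_mul]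
        _ = (cι (G ⧸ S)) (sfun a) * (cι (G ⧸ S)) (sfun b) := by rw [hsfun, hsfun]
        _ = (cι (G ⧸ S)) (sfun a * sfun b) := (map_mul _ _ _).symm
    refine hnosplit' ⟨MonoidHom.mk' sfun hsmul, ?_⟩
    ext x
    show q' (sfun x) = x
    apply hι0inj
    rw [← hπE' (sfun x), hsfun]
    exact hsplit' _
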